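/- arXiv:1202.2815 — 2 statements merged into one kernel-verified Lean document; each statement's English description precedes it below -/
import Mathlib

section
/- Let G(x) = x (the identity) and ν > 0. For the rescaled system dx/dη = (x - y)/ν, dy/dη = (ν/2)x(1 - x²), the origin-type singular point P₀ = (0,0) has Jacobian (1/ν)[[1, -1],[ν²/2, 0]]; its eigenvalues are complex (spiral) if and only if ν > 1/√2. Consequently, for the Hamer model with Burgers flux and g(u) = σu, the condition G'(0) < 2ν² (forcing a discontinuous profile) is equivalent to |u₊ - u₋| > √2·σ, given ν = -[u]/(2σ) = (u₋ - u₊)/(2σ). -/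
theorem stmt_18 (ν σ um up : ℝ) (hσ : 0 < σ) (hup : up < um)
    (hν : ν = (um - up) / (2 * σ))
    (Mc : Matrix (Fin 2) (Fin 2) ℂ)
    (hMc : Mc = ((1 / ν : ℂ)) • !![1, -1; (ν : ℂ) ^ 2 / 2, 0]) :
    ((∃ μ : ℂ, μ.im ≠ 0 ∧ Mc.charpoly.IsRoot μ) ↔ 1 / Real.sqrt 2 < ν) ∧
    ((1 : ℝ) < 2 * ν ^ 2 ↔ Real.sqrt 2 * σ < |up - um|) := by
  have hν0 : 0 < ν := by
    rw [hν]; exact div_pos (by linarith) (by linarith)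
  have hνC : (ν : ℂ) ≠ 0 := by exact_mod_cast hν0.ne'
  have hs2 : (0:ℝ) < Real.sqrt 2 := Real.sqrt_pos.mpr (by norm_num)
  have hs2sq : Real.sqrt 2 ^ 2 = 2 := Real.sq_sqrt (by norm_num)
  -- characterize roots of charpoly
  have hcp : ∀ μ : ℂ, Mc.charpoly.IsRoot μ ↔ μ^2 - (1/(ν:ℂ))*μ + 1/2 = 0 := by
    intro μ
    rw [Matrix.charpoly, Polynomial.IsRoot, Matrix.det_fin_two]
    simp only [Matrix.charmatrix_apply_eq, Matrix.charmatrix_apply_ne, hMc,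
      Matrix.smul_apply, Matrix.of_apply, ne_eq, Fin.isValue, one_ne_zero,
      not_false_eq_true, zero_ne_one, Matrix.cons_val', Matrix.cons_val_zero,
      Matrix.empty_val', Matrix.cons_val_fin_one, Matrix.cons_val_one,
      Matrix.head_cons, Matrix.head_fin_const, smul_eq_mul, Polynomial.eval_add,
      Polynomial.eval_mul, Polynomial.eval_sub, Polynomial.eval_X, Polynomial.eval_C,
      Polynomial.eval_neg, mul_neg, neg_mul, neg_neg, Matrix.head_fin_const,
      one_div, mul_one, mul_zero, sub_zero]
    rw [show ((ν:ℂ))⁻¹ * (((ν:ℂ))⁻¹ * ((ν:ℂ) ^ 2 / 2)) = 2⁻¹ by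
      field_simp]
    constructor <;> intro h <;> linear_combination h
  -- equivalence between the real conditions
  have hkey : 1 / Real.sqrt 2 < ν ↔ 1 < 2 * ν ^ 2 := by
    constructor
    · intro h
      have h2 : 1 < Real.sqrt 2 * ν := by
        rw [div_lt_iff₀ hs2] at h; linarith [mul_comm ν (Real.sqrt 2)]
      nlinarith
    · intro h
      rw [div_lt_iff₀ hs2]
      nlinarith
  constructor
  · constructor
    · rintro ⟨μ, him, hr⟩
      rw [hcp] at hr
      -- multiply by ν
      have hr' : (ν:ℂ) * μ^2 - μ + (ν:ℂ)/2 = 0 := by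
        field_simp at hr
        linear_combination (1/2 : ℂ) * hr
      obtain ⟨hre, him'⟩ := Complex.ext_iff.mp hr'
      simp only [Complex.add_im, Complex.sub_im, Complex.mul_im, Complex.ofReal_im,
        pow_two, Complex.mul_re, Complex.ofReal_re, Complex.add_re, Complex.sub_re,
        Complex.div_ofNat_im, Complex.div_ofNat_re, Complex.zero_re, Complex.zero_im,
        zero_mul, mul_zero, add_zero, zero_add, sub_zero] at hre him'
      -- from imaginary part : μ.re = 1/(2ν)
      have ha : μ.re = 1 / (2*ν) := by
        have hfac : μ.im * (2 * ν * μ.re - 1) = 0 := by nlinarith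
        rcases mul_eq_zero.mp hfac with h | h
        · exact absurd h him
        · field_simp; linarith
      rw [hkey]
      rw [ha] at hre
      have hb2 : 0 < μ.im ^ 2 := by
        rcases lt_or_gt_of_ne him with hh | hh <;> nlinarith
      have hν2 : 0 < ν ^ 2 := by positivity
      have hre' : 4 * ν^2 * μ.im^2 = 2 * ν^2 - 1 := by
        field_simp at hre
        have h16 : (4*ν^2) * (4 * ν^2 * μ.im^2) = (4*ν^2) * (2 * ν^2 - 1) := by
          linear_combination (-4*ν^2) * hre
        exact mul_left_cancel₀ (by positivity) h16
      nlinarith [mul_pos hν2 hb2]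
    · intro h
      rw [hkey] at h
      have hb2 : (0:ℝ) < 1/2 - 1/(4*ν^2) := by
        rw [sub_pos, div_lt_div_iff₀ (by positivity) (by norm_num)]
        nlinarith
      set b := Real.sqrt (1/2 - 1/(4*ν^2)) with hbdef
      have hb0 : 0 < b := Real.sqrt_pos.mpr hb2
      have hbsq : b^2 = 1/2 - 1/(4*ν^2) := Real.sq_sqrt hb2.le
      have hbsq' : 4*ν^2*b^2 = 2*ν^2 - 1 := by
        rw [hbsq]; field_simp; ring
      refine ⟨⟨1/(2*ν), b⟩, by simpa using hb0.ne', ?_⟩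
      rw [hcp]
      have hν0' : ν ≠ 0 := hν0.ne'
      apply Complex.ext
      · simp only [Complex.add_re, Complex.sub_re, Complex.mul_re, Complex.ofReal_re,
          Complex.ofReal_im, pow_two, Complex.zero_re, Complex.one_re, Complex.one_im,
          Complex.div_re, Complex.div_im, Complex.normSq_apply, zero_mul, mul_zero,
          add_zero, zero_add, sub_zero, one_div, Complex.inv_re, Complex.inv_im,
          Complex.re_ofNat, Complex.im_ofNat]
        field_simp
        linear_combination -hbsq'
      · simp only [Complex.add_im, Complex.sub_im, Complex.mul_im, Complex.ofReal_re,
          Complex.ofReal_im, pow_two, Complex.zero_im, Complex.one_re, Complex.one_im,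
          Complex.div_re, Complex.div_im, Complex.normSq_apply, zero_mul, mul_zero,
          add_zero, zero_add, sub_zero, one_div, Complex.inv_re, Complex.inv_im,
          Complex.re_ofNat, Complex.im_ofNat]
        field_simp
        ring
  · have habs : |up - um| = um - up := by rw [abs_of_neg (by linarith)]; ring
    rw [habs]
    have hum : um - up = 2 * σ * ν := by rw [hν]; field_simp
    rw [hum]
    constructor
    · intro h; nlinarith
    · intro h; nlinarith
end

section
/- Let σ > 0, u₊ < u₋ with c = (u₋+u₊)/2 ≠ 0 and g(u) = σu². For the Hamer/Burgers reduced system one has ν = -[u]/(4σc) and G(x) = x - ([u]/(4c))(1 - x²) where [u] = u₊ - u₋. Then: (i) G(±1) = ±1 and G'(0) = 1; (ii) the discontinuity condition G'(0) < 2ν² is equivalent to |u₊ - u₋| > 2√2·σ·|c|; (iii) G is non-monotone on [-1,1] if and only if |u₊ - u₋| > 2|c|. -/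
set_option maxHeartbeats 1000000 in
theorem stmt_19 (σ um up c : ℝ) (hσ : 0 < σ) (hup : up < um)
    (hc : c = (um + up) / 2) (hc0 : c ≠ 0)
    (du : ℝ) (hdu : du = up - um)
    (ν : ℝ) (hν : ν = -du / (4 * σ * c))
    (G : ℝ → ℝ) (hG : G = fun x => x - (du / (4 * c)) * (1 - x ^ 2)) :
    G 1 = 1 ∧ G (-1) = -1 ∧ HasDerivAt G 1 0 ∧
    ((1 : ℝ) < 2 * ν ^ 2 ↔ 2 * Real.sqrt 2 * σ * |c| < |up - um|) ∧
    (¬ MonotoneOn G (Set.Icc (-1 : ℝ) 1) ↔ 2 * |c| < |up - um|) := by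
  have hdu0 : du < 0 := by rw [hdu]; linarith
  have hdune : du ≠ 0 := ne_of_lt hdu0
  have habs : |up - um| = -du := by rw [← hdu, abs_of_neg hdu0]
  refine ⟨by rw [hG]; norm_num, by rw [hG]; norm_num, ?_, ?_, ?_⟩
  · -- derivative
    have h1 : HasDerivAt (fun x : ℝ => x ^ 2) (2 * (0:ℝ) ^ 1) 0 := hasDerivAt_pow 2 0
    have h2 : HasDerivAt (fun x : ℝ => 1 - x ^ 2) (-(2 * (0:ℝ) ^ 1)) 0 := h1.const_sub 1
    have h3 : HasDerivAt (fun x : ℝ => (du / (4 * c)) * (1 - x ^ 2))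
        ((du / (4 * c)) * -(2 * (0:ℝ) ^ 1)) 0 := h2.const_mul _
    have h4 := (hasDerivAt_id (0:ℝ)).sub h3
    rw [hG]
    exact h4.congr_deriv (by norm_num)
  · -- discontinuity condition
    have hσ2 : (0:ℝ) < σ ^ 2 := by positivity
    have hc2 : (0:ℝ) < c ^ 2 := by positivity
    have hsq : ν ^ 2 = du ^ 2 / (16 * σ ^ 2 * c ^ 2) := by
      rw [hν]; field_simp; ring
    have hL : (2 * Real.sqrt 2 * σ * |c|) ^ 2 = 8 * σ ^ 2 * c ^ 2 := by
      have : Real.sqrt 2 ^ 2 = 2 := Real.sq_sqrt (by norm_num)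
      rw [show (2 * Real.sqrt 2 * σ * |c|) ^ 2
        = 4 * Real.sqrt 2 ^ 2 * σ ^ 2 * |c| ^ 2 by ring, this, sq_abs]
      ring
    have hLnn : 0 ≤ 2 * Real.sqrt 2 * σ * |c| := by positivity
    have hR : (-du) ^ 2 = du ^ 2 := by ring
    rw [habs]
    rw [(pow_lt_pow_iff_left₀ hLnn (by linarith) two_ne_zero).symm, hL, hR, hsq]
    rw [show 2 * (du ^ 2 / (16 * σ ^ 2 * c ^ 2)) = du ^ 2 / (8 * σ ^ 2 * c ^ 2) by ring]
    rw [lt_div_iff₀ (by positivity)]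
    constructor <;> intro h <;> nlinarith
  · -- monotonicity
    have hc4 : (4:ℝ) * c ≠ 0 := by simpa using hc0
    rw [habs]
    constructor
    · intro hnm
      by_contra hle
      push_neg at hle
      apply hnm
      intro x hx y hy hxy
      simp only [Set.mem_Icc] at hx hy
      rw [hG]
      simp only
      rcases lt_or_gt_of_ne hc0 with hcn | hcp
      · -- c < 0 : a = du/(4c) ∈ [0, 1/2]
        have ha0 : 0 ≤ du / (4 * c) := by
          rw [div_nonneg_iff]; right; exact ⟨le_of_lt hdu0, by linarith⟩
        have ha1 : du / (4 * c) ≤ 1 / 2 := by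
          rw [div_le_iff_of_neg (by linarith : 4 * c < 0)]
          have := abs_of_neg hcn; linarith
        have key : 0 ≤ 1 + (du / (4 * c)) * (x + y) := by
          nlinarith [mul_nonneg ha0 (by linarith : (0:ℝ) ≤ x + y + 2)]
        nlinarith [mul_nonneg (sub_nonneg.2 hxy) key]
      · -- c > 0 : a = du/(4c) ∈ [-1/2, 0]
        have ha0 : du / (4 * c) ≤ 0 := div_nonpos_of_nonpos_of_nonneg (le_of_lt hdu0) (by linarith)
        have ha1 : -(1 / 2) ≤ du / (4 * c) := by
          rw [le_div_iff₀ (by linarith : (0:ℝ) < 4 * c)]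
          have := abs_of_pos hcp; linarith
        have key : 0 ≤ 1 + (du / (4 * c)) * (x + y) := by
          nlinarith [mul_nonneg (neg_nonneg.2 ha0) (by linarith : (0:ℝ) ≤ 2 - (x + y))]
        nlinarith [mul_nonneg (sub_nonneg.2 hxy) key]
    · intro h hm
      set t : ℝ := -2 * c / du with ht
      rcases lt_or_gt_of_ne hc0 with hcn | hcp
      · -- c < 0 : t ∈ (-1, 0), G (-1) > G t, with -1 ≤ t
        have habs' : |c| = -c := abs_of_neg hcn
        have hdu2c : du < 2 * c := by rw [habs'] at h; linarith
        have ht1 : -1 < t := by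
          rw [ht, lt_div_iff_of_neg hdu0]; linarith
        have ht0 : t < 0 := by
          rw [ht, div_neg_iff]; left; constructor <;> linarith
        have hmem1 : (-1:ℝ) ∈ Set.Icc (-1:ℝ) 1 := by norm_num
        have hmem2 : t ∈ Set.Icc (-1:ℝ) 1 := ⟨le_of_lt ht1, by linarith⟩
        have hGle := hm hmem1 hmem2 (le_of_lt ht1)
        have hdiff : G (-1) - G t = (du - 2 * c) ^ 2 / (4 * c * du) := by
          rw [hG, ht]; field_simp; ring
        have hpos : 0 < (du - 2 * c) ^ 2 / (4 * c * du) :=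
          div_pos (by nlinarith) (by nlinarith)
        linarith [hdiff ▸ hpos]
      · -- c > 0 : t ∈ (0, 1), G t > G 1, with t ≤ 1
        have habs' : |c| = c := abs_of_pos hcp
        have hdu2c : du < -(2 * c) := by rw [habs'] at h; linarith
        have ht0 : 0 < t := by
          rw [ht, div_pos_iff]; right; constructor <;> linarith
        have ht1 : t < 1 := by
          rw [ht, div_lt_iff_of_neg hdu0]; linarith
        have hmem1 : t ∈ Set.Icc (-1:ℝ) 1 := ⟨by linarith, le_of_lt ht1⟩
        have hmem2 : (1:ℝ) ∈ Set.Icc (-1:ℝ) 1 := by norm_num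
        have hGle := hm hmem1 hmem2 (le_of_lt ht1)
        have hdiff : G t - G 1 = (du + 2 * c) ^ 2 / (-(4 * c * du)) := by
          rw [hG, ht]; field_simp; ring
        have hn1 : du + 2 * c < 0 := by linarith
        have hpos : 0 < (du + 2 * c) ^ 2 / (-(4 * c * du)) :=
          div_pos (by nlinarith [mul_pos_of_neg_of_neg hn1 hn1])
            (by nlinarith [mul_pos hcp (neg_pos.2 hdu0)])
        linarith [hdiff ▸ hpos]
end
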